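/- Let S₁*, …, S_{m-1}* be fixed X-element subsets of a Y-element set and let S_m be a uniformly random X-element subset. For every integer r with 0 ≤ r ≤ X and r ≥ X + |⋃_{i<m} S_i*| - Y, the probability that |S_m ∩ (⋃_{i=1}^{m-1} S_i*)| = r is at most (1/r!)·(m X²/(Y - X))^r, provided Y > X and |⋃_{i<m} S_i*| ≤ (m-1)X. -/

import Mathlib

open Finset

lemma aux_ratio (X Y : ℕ) (hXY : X < Y) :
    ∀ r, r ≤ X → Nat.choose Y (X - r) * (Y - X) ^ r ≤ Nat.choose Y X * X ^ r := by
  intro r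
  induction r with
  | zero => simp
  | succ r ih =>
    intro h
    have hr : r ≤ X := Nat.le_of_succ_le h
    have key : Nat.choose Y (X - (r + 1)) * (Y - X) ≤ Nat.choose Y (X - r) * X := by
      have h1 : Nat.choose Y ((X - (r + 1)) + 1) * ((X - (r + 1)) + 1)
          = Nat.choose Y (X - (r + 1)) * (Y - (X - (r + 1))) :=
        Nat.choose_succ_right_eq _ _
      have h2 : X - (r + 1) + 1 = X - r := by omega
      rw [h2] at h1
      calc Nat.choose Y (X - (r + 1)) * (Y - X)
          ≤ Nat.choose Y (X - (r + 1)) * (Y - (X - (r + 1))) :=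
            Nat.mul_le_mul_left _ (by omega)
        _ = Nat.choose Y (X - r) * (X - r) := h1.symm
        _ ≤ Nat.choose Y (X - r) * X := Nat.mul_le_mul_left _ (by omega)
    calc Nat.choose Y (X - (r + 1)) * (Y - X) ^ (r + 1)
        = (Nat.choose Y (X - (r + 1)) * (Y - X)) * (Y - X) ^ r := by ring
      _ ≤ (Nat.choose Y (X - r) * X) * (Y - X) ^ r := Nat.mul_le_mul_right _ key
      _ = X * (Nat.choose Y (X - r) * (Y - X) ^ r) := by ring
      _ ≤ X * (Nat.choose Y X * X ^ r) := Nat.mul_le_mul_left _ (ih hr)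
      _ = Nat.choose Y X * X ^ (r + 1) := by ring

open scoped Classical in
/-- Hypergeometric-type bound: for fixed `X`-subsets `S₁*,…,S_{m-1}*` with union `A`
and a uniform random `X`-subset `S_m`,
`P[|S_m ∩ A| = r] ≤ (1/r!)·(m X²/(Y-X))^r`. -/
theorem stmt3 (X Y m r : ℕ) (hm : 2 ≤ m) (hXY : X < Y)
    (S : Fin (m - 1) → Finset (Fin Y)) (hS : ∀ i, (S i).card = X)
    (hr1 : r ≤ X) (hr2 : X + (Finset.univ.biUnion S).card ≤ Y + r) :
    let Ω := Finset.powersetCard X (Finset.univ : Finset (Fin Y))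
    let A := Finset.univ.biUnion S
    ((Ω.filter (fun T => (T ∩ A).card = r)).card : ℝ) / (Ω.card : ℝ)
      ≤ (1 / (Nat.factorial r : ℝ)) * ((m * X ^ 2 : ℝ) / ((Y : ℝ) - X)) ^ r := by
  intro Ω A
  set a := A.card with ha_def
  have hYcard : (Finset.univ : Finset (Fin Y)).card = Y := by simp
  -- counting bound via the injection T ↦ (T ∩ A, T \ A)
  have hcount : (Ω.filter (fun T => (T ∩ A).card = r)).card
      ≤ Nat.choose a r * Nat.choose (Y - a) (X - r) := by
    have hinj := Finset.card_le_card_of_injOn (fun T => (T ∩ A, T \ A))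
      (s := Ω.filter (fun T => (T ∩ A).card = r))
      (t := Finset.powersetCard r A ×ˢ Finset.powersetCard (X - r) (Finset.univ \ A))
      (fun T hT => by
        obtain ⟨hTΩ, hTr⟩ := Finset.mem_filter.1 hT
        obtain ⟨-, hTX⟩ := Finset.mem_powersetCard.1 hTΩ
        have hsdiff : (T \ A).card = X - r := by
          have := Finset.card_inter_add_card_sdiff T A
          omega
        show (T ∩ A, T \ A) ∈ Finset.powersetCard r A ×ˢ Finset.powersetCard (X - r) (Finset.univ \ A)
        simp only [Finset.mem_product, Finset.mem_powersetCard]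
        refine ⟨⟨Finset.inter_subset_right, hTr⟩, ?_, hsdiff⟩
        intro x hx
        simp only [Finset.mem_sdiff] at hx ⊢
        exact ⟨Finset.mem_univ x, hx.2⟩)
      (fun T1 h1 T2 h2 h => by
        have e1 : T1 ∩ A = T2 ∩ A := congrArg Prod.fst h
        have e2 : T1 \ A = T2 \ A := congrArg Prod.snd h
        ext x
        have c1 := Finset.ext_iff.1 e1 x
        have c2 := Finset.ext_iff.1 e2 x
        by_cases hx : x ∈ A <;>
          simp only [Finset.mem_inter, Finset.mem_sdiff, hx, and_true, and_false,
            not_true, not_false_iff] at c1 c2 <;> tauto)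
    calc (Ω.filter (fun T => (T ∩ A).card = r)).card
        ≤ (Finset.powersetCard r A ×ˢ Finset.powersetCard (X - r)
            ((Finset.univ : Finset (Fin Y)) \ A)).card := hinj
      _ = Nat.choose a r * Nat.choose (Y - a) (X - r) := by
          rw [Finset.card_product, Finset.card_powersetCard, Finset.card_powersetCard,
            Finset.card_sdiff_of_subset (Finset.subset_univ A), hYcard]
  -- card of A
  have ha_le : a ≤ (m - 1) * X := by
    calc a ≤ ∑ i, (S i).card := Finset.card_biUnion_le
      _ = (m - 1) * X := by simp [hS, Finset.sum_const, Finset.card_univ]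
  -- Nat inequality chain
  have hchain : (Ω.filter (fun T => (T ∩ A).card = r)).card * ((Y - X) ^ r * r.factorial)
      ≤ Nat.choose Y X * (m * X ^ 2) ^ r := by
    calc (Ω.filter (fun T => (T ∩ A).card = r)).card * ((Y - X) ^ r * r.factorial)
        ≤ (Nat.choose a r * Nat.choose (Y - a) (X - r)) * ((Y - X) ^ r * r.factorial) :=
          Nat.mul_le_mul_right _ hcount
      _ = (Nat.choose a r * r.factorial) * (Nat.choose (Y - a) (X - r) * (Y - X) ^ r) := by
          ring
      _ ≤ a ^ r * (Nat.choose Y (X - r) * (Y - X) ^ r) := by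
          have hdesc : Nat.choose a r * r.factorial ≤ a ^ r := by
            rw [mul_comm, ← Nat.descFactorial_eq_factorial_mul_choose]
            exact Nat.descFactorial_le_pow a r
          exact Nat.mul_le_mul hdesc
            (Nat.mul_le_mul_right _ (Nat.choose_le_choose _ (Nat.sub_le Y a)))
      _ ≤ a ^ r * (Nat.choose Y X * X ^ r) :=
          Nat.mul_le_mul_left _ (aux_ratio X Y hXY r hr1)
      _ = Nat.choose Y X * (a * X) ^ r := by ring
      _ ≤ Nat.choose Y X * (m * X ^ 2) ^ r := by
          apply Nat.mul_le_mul_left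
          apply Nat.pow_le_pow_left
          calc a * X ≤ ((m - 1) * X) * X := Nat.mul_le_mul_right _ ha_le
            _ ≤ (m * X) * X := by
                apply Nat.mul_le_mul_right
                exact Nat.mul_le_mul_right _ (Nat.sub_le m 1)
            _ = m * X ^ 2 := by ring
  -- pass to ℝ
  have hΩcard : Ω.card = Nat.choose Y X := by
    simp [Ω, Finset.card_powersetCard, hYcard]
  have hN : (0 : ℝ) < Nat.choose Y X :=
    Nat.cast_pos.2 (Nat.choose_pos hXY.le)
  have hYX : (Y : ℝ) - X = ((Y - X : ℕ) : ℝ) := by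
    push_cast [Nat.cast_sub hXY.le]; ring
  have hYXpos : (0 : ℝ) < ((Y - X : ℕ) : ℝ) := by
    have : 0 < Y - X := by omega
    exact_mod_cast this
  have hfac : (0 : ℝ) < (r.factorial : ℝ) := Nat.cast_pos.2 r.factorial_pos
  rw [hΩcard, hYX, div_le_iff₀ hN]
  have hcast : ((Ω.filter (fun T => (T ∩ A).card = r)).card : ℝ)
        * (((Y - X : ℕ) : ℝ) ^ r * (r.factorial : ℝ))
      ≤ (Nat.choose Y X : ℝ) * ((m : ℝ) * (X : ℝ) ^ 2) ^ r := by
    have := hchain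
    exact_mod_cast this
  have hpos : (0 : ℝ) < ((Y - X : ℕ) : ℝ) ^ r * (r.factorial : ℝ) := by positivity
  calc ((Ω.filter (fun T => (T ∩ A).card = r)).card : ℝ)
      ≤ ((Nat.choose Y X : ℝ) * ((m : ℝ) * (X : ℝ) ^ 2) ^ r)
          / (((Y - X : ℕ) : ℝ) ^ r * (r.factorial : ℝ)) := (le_div_iff₀ hpos).2 hcast
    _ = 1 / (r.factorial : ℝ) * ((m : ℝ) * (X : ℝ) ^ 2 / ((Y - X : ℕ) : ℝ)) ^ r
          * (Nat.choose Y X : ℝ) := by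
        rw [div_pow]; field_simp
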